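/- Let F be a field of characteristic not 2, V a 4-dimensional F-vector space with a symplectic form s, and u ∈ Sp(s). If u is a product of three involutions of Sp(s) but is not a product of two involutions of Sp(s), then the trace of u (as a linear endomorphism of V) equals 0. -/
import Mathlib

open Module LinearMap

section Aux

variable {F V : Type*} [Field F] [AddCommGroup V] [Module F V] [FiniteDimensional F V]

/-- Coefficients of a combination of two "independent" vectors vanish. -/
lemma coeffs_zero {v x : V} (hv : v ≠ 0) (hx : x ∉ Submodule.span F {v})
    {s t : F} (h : s • v + t • x = 0) : s = 0 ∧ t = 0 := by
  by_cases ht : t = 0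
  · subst ht
    rw [zero_smul, add_zero] at h
    exact ⟨by simpa [hv] using (smul_eq_zero.mp h), rfl⟩
  · exfalso
    apply hx
    have : x = (-t⁻¹ * s) • v := by
      have h' : t • x = -(s • v) := by linear_combination (norm := module) h
      calc x = t⁻¹ • (t • x) := by rw [smul_smul, inv_mul_cancel₀ ht, one_smul]
      _ = t⁻¹ • (-(s • v)) := by rw [h']
      _ = (-t⁻¹ * s) • v := by module
    rw [this]
    exact Submodule.smul_mem _ _ (Submodule.mem_span_singleton_self v)

lemma finrank_span_pair {v x : V} (hv : v ≠ 0) (hx : x ∉ Submodule.span F {v}) :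
    Module.finrank F (Submodule.span F {v, x} : Submodule F V) = 2 := by
  have hle : Module.finrank F (Submodule.span F {v, x} : Submodule F V) ≤ 2 := by
    have : ({v, x} : Set V) = {v} ∪ {x} := rfl
    rw [this, Submodule.span_union]
    have h1 := Submodule.finrank_sup_add_finrank_inf_eq
      (Submodule.span F {v} : Submodule F V) (Submodule.span F {x})
    have h2 : Module.finrank F (Submodule.span F {v} : Submodule F V) ≤ 1 :=
      finrank_span_le_card _ |>.trans (by simp)
    have h3 : Module.finrank F (Submodule.span F {x} : Submodule F V) ≤ 1 :=
      finrank_span_le_card _ |>.trans (by simp)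
    omega
  have hlt : 1 < Module.finrank F (Submodule.span F {v, x} : Submodule F V) := by
    have hstrict : (Submodule.span F {v} : Submodule F V) < Submodule.span F {v, x} := by
      constructor
      · exact Submodule.span_mono (by simp)
      · intro hcontra
        exact hx (hcontra (Submodule.subset_span (by simp)))
    have := Submodule.finrank_lt_finrank_of_lt hstrict
    rwa [finrank_span_singleton hv] at this
  omega

end Aux

/-- A self-adjoint operator w.r.t. a nondegenerate alternating form on a 4-dimensional
space satisfies a quadratic polynomial. -/
lemma quad_of_selfadj {F V : Type*} [Field F] [AddCommGroup V] [Module F V]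
    [FiniteDimensional F V] (hdim : Module.finrank F V = 4)
    (B : V →ₗ[F] V →ₗ[F] F) (hBalt : ∀ x, B x x = 0)
    (hBnd : ∀ x, (∀ y, B x y = 0) → x = 0) (h2F : (2:F) ≠ 0)
    (w : V →ₗ[F] V) (hw : ∀ x y, B (w x) y = B x (w y)) :
    ∃ α β : F, ∀ x, w (w x) = α • w x + β • x := by
  have hskew : ∀ x y, B x y = - B y x := by
    intro x y
    have h := hBalt (x + y)
    simp only [map_add, LinearMap.add_apply, hBalt x, hBalt y] at h
    linear_combination h
  have hinj : Function.Injective B := by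
    intro x y hxy
    have h0 : x - y = 0 := by
      apply hBnd
      intro z
      rw [map_sub, LinearMap.sub_apply, hxy, sub_self]
    exact sub_eq_zero.mp h0
  have hsurj : Function.Surjective B :=
    (LinearMap.injective_iff_surjective_of_finrank_eq_finrank
      (by rw [Subspace.dual_finrank_eq])).mp hinj
  let e : V ≃ₗ[F] Module.Dual F V := LinearEquiv.ofBijective B ⟨hinj, hsurj⟩
  -- orthogonal complement
  let perp : Submodule F V → Submodule F V := fun S =>
    (S.map (e : V →ₗ[F] Module.Dual F V)).dualCoannihilator
  have hperp_mem : ∀ (S : Submodule F V) (z : V), z ∈ perp S ↔ ∀ x ∈ S, B x z = 0 := by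
    intro S z
    rw [Submodule.mem_dualCoannihilator]
    constructor
    · intro h x hx
      exact h (B x) (Submodule.mem_map_of_mem hx)
    · rintro h φ hφ
      obtain ⟨x, hx, rfl⟩ := hφ
      exact h x hx
  have hperp_rank : ∀ S : Submodule F V,
      Module.finrank F S + Module.finrank F (perp S) = 4 := by
    intro S
    have h1 := Subspace.finrank_add_finrank_dualCoannihilator_eq
      (S.map (e : V →ₗ[F] Module.Dual F V))
    rw [hdim] at h1
    rwa [LinearEquiv.finrank_map_eq e S] at h1
  have hperp_eq : ∀ S : Submodule F V, S ≤ perp S → Module.finrank F S = 2 → perp S = S := by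
    intro S hle hfr
    have h1 := hperp_rank S
    exact (Submodule.eq_of_le_of_finrank_le hle (by omega)).symm
  -- pointwise quadratic
  have hB01 : ∀ v : V, B v (w v) = 0 := by
    intro v
    have h1 : B (w v) v = B v (w v) := hw v v
    have h2 := hskew v (w v)
    have h3 : (2:F) * B v (w v) = 0 := by linear_combination h2 - h1
    rcases mul_eq_zero.mp h3 with h | h
    · exact absurd h h2F
    · exact h
  have hB10 : ∀ v : V, B (w v) v = 0 := fun v => (hw v v).trans (hB01 v)
  have hB12 : ∀ v : V, B (w v) (w (w v)) = 0 := by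
    intro v
    have h1 : B (w (w v)) (w v) = B (w v) (w (w v)) := hw (w v) (w v)
    have h2 := hskew (w v) (w (w v))
    have h3 : (2:F) * B (w v) (w (w v)) = 0 := by linear_combination h2 - h1
    rcases mul_eq_zero.mp h3 with h | h
    · exact absurd h h2F
    · exact h
  have hB21 : ∀ v : V, B (w (w v)) (w v) = 0 := fun v => (hw (w v) (w v)).trans (hB12 v)
  have hB02 : ∀ v : V, B v (w (w v)) = 0 := by
    intro v
    rw [← hw v (w v), hBalt]
  have hB20 : ∀ v : V, B (w (w v)) v = 0 := by
    intro v
    rw [hskew, hB02]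
    ring
  have hpt : ∀ v : V, w (w v) ∈ Submodule.span F {v, w v} := by
    intro v
    by_contra hmem
    have hv0 : v ≠ 0 := by
      rintro rfl
      exact hmem (by simp [map_zero, Submodule.zero_mem])
    have hwv : w v ∉ Submodule.span F {v} := by
      intro hwv
      obtain ⟨c, hc⟩ := Submodule.mem_span_singleton.mp hwv
      apply hmem
      have h4 : w (w v) = c • (w v) := by
        conv_lhs => rw [← hc, map_smul]
      rw [h4]
      exact Submodule.smul_mem _ _ (Submodule.subset_span (by simp))
    have hW2fr : Module.finrank F (Submodule.span F {v, w v} : Submodule F V) = 2 :=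
      finrank_span_pair hv0 hwv
    have hgen : ∀ z ∈ Submodule.span F {v, w v},
        B z v = 0 ∧ B z (w v) = 0 ∧ B z (w (w v)) = 0 := by
      intro z hz
      obtain ⟨a, b, rfl⟩ := Submodule.mem_span_pair.mp hz
      refine ⟨?_, ?_, ?_⟩ <;>
        simp [map_add, map_smul, hBalt, hB01, hB10, hB02, hB12]
    have hle : Submodule.span F {v, w v} ≤ perp (Submodule.span F {v, w v}) := by
      intro z hz
      rw [hperp_mem]
      intro x hx
      obtain ⟨a, b, rfl⟩ := Submodule.mem_span_pair.mp hz
      have h3 := hgen x hx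
      simp only [map_add, map_smul, smul_eq_mul, h3.1, h3.2.1]
      ring
    have hperpW2 : perp (Submodule.span F {v, w v}) = Submodule.span F {v, w v} :=
      hperp_eq _ hle hW2fr
    apply hmem
    rw [← hperpW2, hperp_mem]
    intro x hx
    exact (hgen x hx).2.2
  -- main case split
  by_cases hscal : ∀ v : V, w v ∈ Submodule.span F {v}
  · -- w is scalar
    have : Nontrivial V := Module.nontrivial_of_finrank_pos (R := F) (by omega)
    obtain ⟨v₁, hv₁⟩ := exists_ne (0 : V)
    obtain ⟨lam, hlam⟩ := Submodule.mem_span_singleton.mp (hscal v₁)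
    have hall : ∀ x : V, w x = lam • x := by
      intro x
      by_cases hx : x ∈ Submodule.span F {v₁}
      · obtain ⟨c, rfl⟩ := Submodule.mem_span_singleton.mp hx
        rw [map_smul, ← hlam, smul_smul, smul_smul, mul_comm]
      · obtain ⟨mu, hmu⟩ := Submodule.mem_span_singleton.mp (hscal x)
        obtain ⟨nu, hnu⟩ := Submodule.mem_span_singleton.mp (hscal (v₁ + x))
        have hcomb : (nu - lam) • v₁ + (nu - mu) • x = 0 := by
          have : nu • v₁ + nu • x = lam • v₁ + mu • x := by
            rw [← smul_add]
            rw [hnu, map_add, ← hlam, ← hmu]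
          linear_combination (norm := module) this
        obtain ⟨h5, h6⟩ := coeffs_zero hv₁ hx hcomb
        have : mu = lam := by
          have : nu = lam := by linear_combination h5
          have h7 : nu = mu := by linear_combination h6
          linear_combination this - h7
        rw [← hmu, this]
    refine ⟨0, lam * lam, fun x => ?_⟩
    rw [hall, hall, smul_smul, zero_smul, zero_add]
  · push_neg at hscal
    obtain ⟨v₀, hv₀span⟩ := hscal
    have hv₀ : v₀ ≠ 0 := by
      rintro rfl
      exact hv₀span (by simp [map_zero, Submodule.zero_mem])
    obtain ⟨β₀, α₀, hαβ⟩ := Submodule.mem_span_pair.mp (hpt v₀)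
    -- hαβ : β₀ • v₀ + α₀ • w v₀ = w (w v₀)
    set N : V →ₗ[F] V := w ∘ₗ w - α₀ • w - β₀ • LinearMap.id with hNdef
    have hN : ∀ x, N x = w (w x) - α₀ • w x - β₀ • x := by
      intro x
      simp [hNdef, LinearMap.sub_apply, LinearMap.smul_apply]
    have hNv₀ : N v₀ = 0 := by
      rw [hN, ← hαβ]
      module
    have hNw : ∀ x, N (w x) = w (N x) := by
      intro x
      rw [hN, hN, map_sub, map_sub, map_smul, map_smul]
    have hNwv₀ : N (w v₀) = 0 := by rw [hNw, hNv₀, map_zero]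
    have hNW₀ : ∀ x ∈ Submodule.span F {v₀, w v₀}, N x = 0 := by
      intro x hx
      obtain ⟨a, b, rfl⟩ := Submodule.mem_span_pair.mp hx
      rw [map_add, map_smul, map_smul, hNv₀, hNwv₀, smul_zero, smul_zero, add_zero]
    have hNadj : ∀ x y, B (N x) y = B x (N y) := by
      intro x y
      rw [hN, hN]
      simp only [map_sub, map_smul, LinearMap.sub_apply, LinearMap.smul_apply]
      rw [hw (w x) y, hw x (w y), hw x y]
    -- W₀ is isotropic with perp W₀ = W₀
    have hW₀fr : Module.finrank F (Submodule.span F {v₀, w v₀} : Submodule F V) = 2 := by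
      apply finrank_span_pair hv₀
      intro hmem
      obtain ⟨c, hc⟩ := Submodule.mem_span_singleton.mp hmem
      exact hv₀span (Submodule.mem_span_singleton.mpr ⟨c, hc⟩)
    have hle : Submodule.span F {v₀, w v₀} ≤ perp (Submodule.span F {v₀, w v₀}) := by
      intro z hz
      rw [hperp_mem]
      intro x hx
      obtain ⟨a, b, rfl⟩ := Submodule.mem_span_pair.mp hz
      obtain ⟨a', b', rfl⟩ := Submodule.mem_span_pair.mp hx
      simp [map_add, map_smul, hBalt, hB01, hB10]
    have hperpW₀ : perp (Submodule.span F {v₀, w v₀}) = Submodule.span F {v₀, w v₀} :=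
      hperp_eq _ hle hW₀fr
    have hNin : ∀ z, N z ∈ Submodule.span F {v₀, w v₀} := by
      intro z
      rw [← hperpW₀, hperp_mem]
      intro x hx
      rw [hskew, hNadj z x, hNW₀ x hx, map_zero, neg_zero]
    -- now show N = 0
    refine ⟨α₀, β₀, fun x => ?_⟩
    have key : ∀ u, N u = 0 := by
      by_contra hNne
      push_neg at hNne
      obtain ⟨u, hu⟩ := hNne
      have htW : N u ∈ Submodule.span F {v₀, w v₀} := hNin u
      have huW : u ∉ Submodule.span F {v₀, w v₀} := fun h => hu (hNW₀ u h)
      obtain ⟨δ, γ, hγδ⟩ := Submodule.mem_span_pair.mp (hpt u)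
      -- hγδ : δ • u + γ • w u = w (w u)
      have ht_eq : N u = (γ - α₀) • w u + (δ - β₀) • u := by
        rw [hN, ← hγδ]
        module
      have hγ : γ - α₀ ≠ 0 := by
        intro h0
        rw [h0, zero_smul, zero_add] at ht_eq
        by_cases h1 : δ - β₀ = 0
        · rw [h1, zero_smul] at ht_eq
          exact hu ht_eq
        · apply huW
          have : u = (δ - β₀)⁻¹ • N u := by
            rw [ht_eq, smul_smul, inv_mul_cancel₀ h1, one_smul]
          rw [this]
          exact Submodule.smul_mem _ _ htW
      set ν : F := (γ - α₀)⁻¹ with hνdef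
      have hν : ν ≠ 0 := inv_ne_zero hγ
      set lam : F := -(ν * (δ - β₀)) with hlamdef
      have hwu : w u = lam • u + ν • N u := by
        have h7 : (γ - α₀) • w u = N u - (δ - β₀) • u := by
          rw [ht_eq]; module
        have h8 : w u = ν • ((γ - α₀) • w u) := by
          rw [smul_smul, hνdef, inv_mul_cancel₀ hγ, one_smul]
        rw [h8, h7, hlamdef]
        module
      have hNt : N (N u) = 0 := hNW₀ _ htW
      have hwt : w (N u) = lam • N u := by
        rw [← hNw, hwu, map_add, map_smul, map_smul, hNt, smul_zero, add_zero]
      -- independence of u and N u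
      have hut : ∀ p q : F, p • u + q • N u = 0 → p = 0 ∧ q = 0 := by
        intro p q hpq
        by_cases hp : p = 0
        · subst hp
          rw [zero_smul, zero_add] at hpq
          rcases smul_eq_zero.mp hpq with h | h
          · exact ⟨rfl, h⟩
          · exact absurd h hu
        · exfalso
          apply huW
          have : u = (-p⁻¹ * q) • N u := by
            have h9 : p • u = -(q • N u) := by linear_combination (norm := module) hpq
            calc u = p⁻¹ • (p • u) := by rw [smul_smul, inv_mul_cancel₀ hp, one_smul]
            _ = p⁻¹ • (-(q • N u)) := by rw [h9]
            _ = (-p⁻¹ * q) • N u := by module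
          rw [this]
          exact Submodule.smul_mem _ _ htW
      -- recompute N u to get the two scalar identities
      have hrecomp : (lam * lam - α₀ * lam - β₀) • u + (ν * (2 * lam - α₀) - 1) • N u = 0 := by
        have h10 : w (w u) = (lam * lam) • u + (2 * lam * ν) • N u := by
          rw [hwu, map_add, map_smul, map_smul, hwu, hwt]
          module
        have h11 := hN u
        rw [h10, hwu] at h11
        linear_combination (norm := module) - h11
      obtain ⟨hq, hν2'⟩ := hut _ _ hrecomp
      have hν2 : ν * (2 * lam - α₀) = 1 := by linear_combination hν2'
      have h2lam : 2 * lam - α₀ ≠ 0 := by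
        intro h0
        rw [h0, mul_zero] at hν2
        exact zero_ne_one hν2
      -- the vector r
      set r : V := w v₀ - lam • v₀ with hrdef
      have hr0 : r ≠ 0 := by
        intro h0
        apply hv₀span
        have : w v₀ = lam • v₀ := by
          have := sub_eq_zero.mp h0
          linear_combination (norm := module) this
        exact Submodule.mem_span_singleton.mpr ⟨lam, this.symm⟩
      have hrW : r ∈ Submodule.span F {v₀, w v₀} := by
        apply Submodule.sub_mem
        · exact Submodule.subset_span (by simp)
        · exact Submodule.smul_mem _ _ (Submodule.subset_span (by simp))
      have hwr : w r = (α₀ - lam) • r := by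
        rw [hrdef, map_sub, map_smul, ← hαβ]
        have hq' : β₀ = lam * lam - α₀ * lam := by linear_combination - hq
        rw [hq']
        module
      -- W₀ = span {N u, r}
      have htr_indep : ∀ p q : F, p • N u + q • r = 0 → p = 0 ∧ q = 0 := by
        intro p q hpq
        have happ : (p * lam) • N u + (q * (α₀ - lam)) • r = 0 := by
          have := congrArg w hpq
          rw [map_add, map_smul, map_smul, hwt, hwr, map_zero] at this
          linear_combination (norm := module) this
        have hcomb : (q * (α₀ - lam) - q * lam) • r = 0 := by
          have h12 : (p*lam) • N u + (q * (α₀ - lam)) • r - lam • (p • N u + q • r) = 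
              (q * (α₀ - lam) - q * lam) • r := by module
          rw [← h12, happ, hpq, smul_zero, sub_zero]
        have hql : q * (α₀ - lam) - q * lam = 0 := by
          rcases smul_eq_zero.mp hcomb with h | h
          · exact h
          · exact absurd h hr0
        have hq0 : q = 0 := by
          have : q * (α₀ - 2 * lam) = 0 := by linear_combination hql
          rcases mul_eq_zero.mp this with h | h
          · exact h
          · exfalso; apply h2lam; linear_combination - h
        constructor
        · subst hq0
          rw [zero_smul, add_zero] at hpq
          rcases smul_eq_zero.mp hpq with h | h
          · exact h
          · exact absurd h hu
        · exact hq0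
      have hW₀eq : Submodule.span F {v₀, w v₀} = Submodule.span F {N u, r} := by
        symm
        apply Submodule.eq_of_le_of_finrank_le
        · rw [Submodule.span_le]
          rintro z (rfl | rfl)
          · exact htW
          · exact hrW
        · rw [hW₀fr]
          have : Module.finrank F (Submodule.span F {N u, r} : Submodule F V) = 2 := by
            apply finrank_span_pair hu
            intro hmem
            obtain ⟨c, hc⟩ := Submodule.mem_span_singleton.mp hmem
            have : c • N u + (-1 : F) • r = 0 := by
              rw [hc]; module
            have := (htr_indep _ _ this).2
            norm_num at this
          omega
      -- the key vanishing results
      have hBut : B u (N u) = 0 := by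
        have h1 : B (N u) u = B u (N u) := hNadj u u
        have h2 := hskew u (N u)
        have h3 : (2:F) * B u (N u) = 0 := by linear_combination h2 - h1
        rcases mul_eq_zero.mp h3 with h | h
        · exact absurd h h2F
        · exact h
      have hBur : B u r = 0 := by
        have h1 : B (w r) u = B r (w u) := hw r u
        rw [hwr, hwu] at h1
        have h2 : B r (N u) = 0 := by
          -- both in W₀, which is isotropic
          have := hle hrW
          rw [hperp_mem] at this
          rw [hskew]
          rw [this (N u) htW]
          ring
        simp only [map_add, map_smul, LinearMap.smul_apply, smul_eq_mul, h2] at h1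
        -- h1 : (α₀ - lam) * B r u = lam * B r u + ν * 0
        have h3 : (α₀ - 2*lam) * B r u = 0 := by linear_combination h1
        have h4 : B r u = 0 := by
          rcases mul_eq_zero.mp h3 with h | h
          · exfalso; apply h2lam; linear_combination - h
          · exact h
        rw [hskew, h4, neg_zero]
      -- conclude N u = 0
      apply hu
      apply hBnd
      intro z
      have h5 : B (N u) z = B u (N z) := hNadj u z
      have h6 := hNin z
      rw [hW₀eq] at h6
      obtain ⟨a, b, hab⟩ := Submodule.mem_span_pair.mp h6
      rw [h5, ← hab]
      simp only [map_add, map_smul, smul_eq_mul, hBut, hBur]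
      ring
    rw [← sub_eq_zero]
    have := key x
    rw [hN] at this
    linear_combination (norm := module) this


/-- For a symplectic transformation, the trace of the inverse equals the trace. -/
lemma trace_symm_eq {F V : Type*} [Field F] [AddCommGroup V] [Module F V]
    [FiniteDimensional F V]
    (s : V →ₗ[F] V →ₗ[F] F) (hnd : ∀ x, (∀ y, s x y = 0) → x = 0)
    (g : V ≃ₗ[F] V) (hg : ∀ x y, s (g x) (g y) = s x y) :
    LinearMap.trace F V (g.symm : V →ₗ[F] V) = LinearMap.trace F V (g : V →ₗ[F] V) := by
  have hinj : Function.Injective s := by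
    intro x y hxy
    have h0 : x - y = 0 := by
      apply hnd
      intro z
      rw [map_sub, LinearMap.sub_apply, hxy, sub_self]
    exact sub_eq_zero.mp h0
  have hsurj : Function.Surjective s :=
    (LinearMap.injective_iff_surjective_of_finrank_eq_finrank
      (by rw [Subspace.dual_finrank_eq])).mp hinj
  let φ : V ≃ₗ[F] Module.Dual F V := LinearEquiv.ofBijective s ⟨hinj, hsurj⟩
  have key : ∀ x, φ (g.symm x) = Module.Dual.transpose (R := F) (g : V →ₗ[F] V) (φ x) := by
    intro x
    apply LinearMap.ext
    intro y
    have hφ : ∀ z, φ z = s z := fun z => rfl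
    rw [hφ, hφ, Module.Dual.transpose_apply, LinearMap.comp_apply]
    calc s (g.symm x) y = s (g (g.symm x)) (g y) := (hg _ _).symm
    _ = s x (g y) := by rw [g.apply_symm_apply]
  have hconj : φ.conj (g.symm : V →ₗ[F] V) = Module.Dual.transpose (R := F) (g : V →ₗ[F] V) := by
    apply LinearMap.ext
    intro ψ
    rw [LinearEquiv.conj_apply]
    simp only [LinearMap.comp_apply, LinearEquiv.coe_coe]
    rw [key (φ.symm ψ), φ.apply_symm_apply]
  calc LinearMap.trace F V (g.symm : V →ₗ[F] V)
      = LinearMap.trace F _ (φ.conj (g.symm : V →ₗ[F] V)) := (LinearMap.trace_conj' _ φ).symm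
    _ = LinearMap.trace F _ (Module.Dual.transpose (R := F) (g : V →ₗ[F] V)) := by rw [hconj]
    _ = LinearMap.trace F V (g : V →ₗ[F] V) := LinearMap.trace_transpose' _

/-- A symplectic involution other than ±1 on a 4-dimensional space has trace 0. -/
lemma trace_invol {F V : Type*} [Field F] [AddCommGroup V] [Module F V]
    [FiniteDimensional F V] (hdim : Module.finrank F V = 4)
    (s : V →ₗ[F] V →ₗ[F] F) (halt : ∀ x, s x x = 0)
    (hnd : ∀ x, (∀ y, s x y = 0) → x = 0) (h2F : (2:F) ≠ 0)
    (c : V ≃ₗ[F] V) (hc : ∀ x y, s (c x) (c y) = s x y) (hc2 : ∀ x, c (c x) = x)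
    (hne1 : ∃ x, c x ≠ x) (hne2 : ∃ x, c x ≠ -x) :
    LinearMap.trace F V (c : V →ₗ[F] V) = 0 := by
  set Vp : Submodule F V := LinearMap.ker ((c : V →ₗ[F] V) - LinearMap.id) with hVp
  set Vm : Submodule F V := LinearMap.ker ((c : V →ₗ[F] V) + LinearMap.id) with hVm
  have memVp : ∀ x, x ∈ Vp ↔ c x = x := by
    intro x
    rw [hVp, LinearMap.mem_ker, LinearMap.sub_apply, LinearMap.id_apply, sub_eq_zero]
    rfl
  have memVm : ∀ x, x ∈ Vm ↔ c x = -x := by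
    intro x
    rw [hVm, LinearMap.mem_ker, LinearMap.add_apply, LinearMap.id_apply, add_eq_zero_iff_eq_neg]
    rfl
  have hdecomp : ∀ y : V, (2:F)⁻¹ • (y + c y) ∈ Vp ∧ (2:F)⁻¹ • (y - c y) ∈ Vm ∧
      y = (2:F)⁻¹ • (y + c y) + (2:F)⁻¹ • (y - c y) := by
    intro y
    refine ⟨?_, ?_, ?_⟩
    · rw [memVp, map_smul, map_add, hc2]
      rw [add_comm]
    · rw [memVm, map_smul, map_sub, hc2]
      rw [← smul_neg]
      congr 1
      abel
    · rw [← smul_add]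
      have : y + c y + (y - c y) = (2:F) • y := by
        rw [two_smul]; abel
      rw [this, smul_smul, inv_mul_cancel₀ h2F, one_smul]
  have hinf : Vp ⊓ Vm = ⊥ := by
    rw [Submodule.eq_bot_iff]
    intro x hx
    obtain ⟨hxp, hxm⟩ := Submodule.mem_inf.mp hx
    rw [memVp] at hxp
    rw [memVm] at hxm
    have h2x : (2:F) • x = 0 := by
      rw [two_smul]
      nth_rewrite 1 [← hxp]
      rw [hxm]
      abel
    rcases smul_eq_zero.mp h2x with h | h
    · exact absurd h h2F
    · exact h
  have hsup : Vp ⊔ Vm = ⊤ := by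
    rw [Submodule.eq_top_iff']
    intro y
    obtain ⟨h1, h2, h3⟩ := hdecomp y
    rw [h3]
    exact Submodule.add_mem_sup h1 h2
  have hcompl : IsCompl Vp Vm := IsCompl.of_eq hinf hsup
  -- no eigenspace can be 1-dimensional
  have hnot1p : Module.finrank F Vp ≠ 1 := by
    intro h1
    have hVpne : Vp ≠ ⊥ := by
      intro h0
      rw [h0, finrank_bot] at h1
      exact zero_ne_one h1
    obtain ⟨z, hzVp, hz0⟩ := Submodule.exists_mem_ne_zero_of_ne_bot hVpne
    have hVpspan : Vp = Submodule.span F {z} := by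
      symm
      apply Submodule.eq_of_le_of_finrank_le
      · rw [Submodule.span_le, Set.singleton_subset_iff]; exact hzVp
      · rw [h1, finrank_span_singleton hz0]
    apply hz0
    apply hnd
    intro y
    obtain ⟨h1', h2', h3'⟩ := hdecomp y
    rw [h3', map_add]
    have hzp : s z ((2:F)⁻¹ • (y + c y)) = 0 := by
      have : (2:F)⁻¹ • (y + c y) ∈ Submodule.span F {z} := by rw [← hVpspan]; exact h1'
      obtain ⟨k, hk⟩ := Submodule.mem_span_singleton.mp this
      rw [← hk, map_smul, smul_eq_mul, halt, mul_zero]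
    have hzm : s z ((2:F)⁻¹ • (y - c y)) = 0 := by
      set m := (2:F)⁻¹ • (y - c y)
      have hcz : c z = z := (memVp z).mp hzVp
      have hcm : c m = -m := (memVm m).mp h2'
      have h4 : s z m = s (c z) (c m) := (hc z m).symm
      rw [hcz, hcm, map_neg] at h4
      have h5 : (2:F) * s z m = 0 := by linear_combination h4
      rcases mul_eq_zero.mp h5 with h | h
      · exact absurd h h2F
      · exact h
    rw [hzp, hzm, add_zero]
  have hnot1m : Module.finrank F Vm ≠ 1 := by
    intro h1
    have hVmne : Vm ≠ ⊥ := by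
      intro h0
      rw [h0, finrank_bot] at h1
      exact zero_ne_one h1
    obtain ⟨z, hzVm, hz0⟩ := Submodule.exists_mem_ne_zero_of_ne_bot hVmne
    have hVmspan : Vm = Submodule.span F {z} := by
      symm
      apply Submodule.eq_of_le_of_finrank_le
      · rw [Submodule.span_le, Set.singleton_subset_iff]; exact hzVm
      · rw [h1, finrank_span_singleton hz0]
    apply hz0
    apply hnd
    intro y
    obtain ⟨h1', h2', h3'⟩ := hdecomp y
    rw [h3', map_add]
    have hzm : s z ((2:F)⁻¹ • (y - c y)) = 0 := by
      have : (2:F)⁻¹ • (y - c y) ∈ Submodule.span F {z} := by rw [← hVmspan]; exact h2'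
      obtain ⟨k, hk⟩ := Submodule.mem_span_singleton.mp this
      rw [← hk, map_smul, smul_eq_mul, halt, mul_zero]
    have hzp : s z ((2:F)⁻¹ • (y + c y)) = 0 := by
      set p := (2:F)⁻¹ • (y + c y)
      have hcz : c z = -z := (memVm z).mp hzVm
      have hcp : c p = p := (memVp p).mp h1'
      have h4 : s z p = s (c z) (c p) := (hc z p).symm
      rw [hcz, hcp, map_neg, LinearMap.neg_apply] at h4
      have h5 : (2:F) * s z p = 0 := by linear_combination h4
      rcases mul_eq_zero.mp h5 with h | h
      · exact absurd h h2F
      · exact h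
    rw [hzp, hzm, add_zero]
  -- finranks add to 4
  have hadd : Module.finrank F Vp + Module.finrank F Vm = 4 := by
    have h1 := Submodule.finrank_sup_add_finrank_inf_eq Vp Vm
    rw [hsup, hinf, finrank_bot, finrank_top, hdim, add_zero] at h1
    omega
  -- exclude 4 and 0
  have hnot4p : Module.finrank F Vp ≠ 4 := by
    intro h4
    obtain ⟨x, hx⟩ := hne1
    apply hx
    have : Vp = ⊤ := Submodule.eq_top_of_finrank_eq (by rw [h4, hdim])
    exact (memVp x).mp (this ▸ Submodule.mem_top)
  have hnot4m : Module.finrank F Vm ≠ 4 := by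
    intro h4
    obtain ⟨x, hx⟩ := hne2
    apply hx
    have : Vm = ⊤ := Submodule.eq_top_of_finrank_eq (by rw [h4, hdim])
    exact (memVm x).mp (this ▸ Submodule.mem_top)
  have hnot3p : Module.finrank F Vp ≠ 3 := fun h3 => hnot1m (by omega)
  have hnot3m : Module.finrank F Vm ≠ 3 := fun h3 => hnot1p (by omega)
  have hfrp : Module.finrank F Vp = 2 := by omega
  have hfrm : Module.finrank F Vm = 2 := by omega
  -- compute the trace via the direct sum decomposition
  let e : (Vp × Vm) ≃ₗ[F] V := Submodule.prodEquivOfIsCompl Vp Vm hcompl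
  set pm : (Vp × Vm) →ₗ[F] (Vp × Vm) :=
    LinearMap.prodMap LinearMap.id (-LinearMap.id) with hpm
  have h1 : (c : V →ₗ[F] V) ∘ₗ (e : Vp × Vm →ₗ[F] V) = (e : Vp × Vm →ₗ[F] V) ∘ₗ pm := by
    apply LinearMap.ext
    rintro ⟨p, m⟩
    have hcp : c (p : V) = (p : V) := (memVp _).mp p.2
    have hcm : c (m : V) = -(m : V) := (memVm _).mp m.2
    have he : ∀ (a : Vp) (b : Vm), e (a, b) = (a : V) + (b : V) := fun a b => rfl
    simp only [LinearMap.comp_apply, LinearEquiv.coe_coe, hpm, LinearMap.prodMap_apply,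
      LinearMap.id_apply, LinearMap.neg_apply]
    rw [he, he, map_add, hcp, hcm]
    simp
  have hconj : e.conj pm = (c : V →ₗ[F] V) := by
    apply LinearMap.ext
    intro x
    rw [LinearEquiv.conj_apply]
    simp only [LinearMap.comp_apply, LinearEquiv.coe_coe]
    have := LinearMap.congr_fun h1 (e.symm x)
    simp only [LinearMap.comp_apply, LinearEquiv.coe_coe, e.apply_symm_apply] at this
    exact this.symm
  rw [← hconj, LinearMap.trace_conj', hpm, LinearMap.trace_prodMap']
  rw [LinearMap.trace_id, map_neg, LinearMap.trace_id, hfrp, hfrm]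
  ring


/-- The Trace Trick. Let `(V, s)` be a 4-dimensional symplectic space over a field `F`
of characteristic not 2 and `u ∈ Sp(s)`. If `u` is a product of three involutions of
`Sp(s)` but not a product of two involutions of `Sp(s)`, then `tr u = 0`. -/
theorem trace_trick
    (F : Type*) [Field F] (hF : ringChar F ≠ 2)
    (V : Type*) [AddCommGroup V] [Module F V] [FiniteDimensional F V]
    (hdim : Module.finrank F V = 4)
    (s : V →ₗ[F] V →ₗ[F] F)
    (halt : ∀ x, s x x = 0)
    (hnd : ∀ x, (∀ y, s x y = 0) → x = 0)
    (u : V ≃ₗ[F] V)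
    (hu : ∀ x y, s (u x) (u y) = s x y)
    (h3 : ∃ i₁ i₂ i₃ : V ≃ₗ[F] V,
      (∀ x y, s (i₁ x) (i₁ y) = s x y) ∧
      (∀ x y, s (i₂ x) (i₂ y) = s x y) ∧
      (∀ x y, s (i₃ x) (i₃ y) = s x y) ∧
      (∀ x, i₁ (i₁ x) = x) ∧ (∀ x, i₂ (i₂ x) = x) ∧ (∀ x, i₃ (i₃ x) = x) ∧
      (∀ x, u x = i₁ (i₂ (i₃ x))))
    (h2 : ¬ ∃ i j : V ≃ₗ[F] V,
      (∀ x y, s (i x) (i y) = s x y) ∧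
      (∀ x y, s (j x) (j y) = s x y) ∧
      (∀ x, i (i x) = x) ∧ (∀ x, j (j x) = x) ∧
      (∀ x, u x = i (j x))) :
    LinearMap.trace F V (u : V →ₗ[F] V) = 0 := by
  obtain ⟨a, b, c, ha, hb, hc, ha2, hb2, hc2, hu3⟩ := h3
  have h2F : (2:F) ≠ 0 := Ring.two_ne_zero hF
  have hskew : ∀ x y, s x y = - s y x := by
    intro x y
    have h := halt (x + y)
    simp only [map_add, LinearMap.add_apply, halt x, halt y] at h
    linear_combination h
  -- `move` lemma for symplectic involutions
  have hmv : ∀ (g : V ≃ₗ[F] V), (∀ x y, s (g x) (g y) = s x y) → (∀ x, g (g x) = x) →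
      ∀ x y, s (g x) y = s x (g y) := by
    intro g hg hg2 x y
    calc s (g x) y = s (g x) (g (g y)) := by rw [hg2]
    _ = s x (g y) := hg x (g y)
  -- linear map versions
  have hu3L : (u : V →ₗ[F] V) =
      ((a : V →ₗ[F] V) ∘ₗ (b : V →ₗ[F] V)) ∘ₗ (c : V →ₗ[F] V) := by
    apply LinearMap.ext
    intro x
    simp only [LinearMap.comp_apply, LinearEquiv.coe_coe]
    exact hu3 x
  -- c is not ±1
  have hne1c : ∃ x, c x ≠ x := by
    by_contra hcon
    push_neg at hcon
    exact h2 ⟨a, b, ha, hb, ha2, hb2, fun x => by rw [hu3 x, hcon x]⟩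
  have hne2c : ∃ x, c x ≠ -x := by
    by_contra hcon
    push_neg at hcon
    refine h2 ⟨a, b.trans (LinearEquiv.neg F), ha, ?_, ha2, ?_, ?_⟩
    · intro x y
      simp only [LinearEquiv.trans_apply, LinearEquiv.neg_apply, map_neg,
        LinearMap.neg_apply, neg_neg]
      exact hb x y
    · intro x
      simp only [LinearEquiv.trans_apply, LinearEquiv.neg_apply, map_neg, neg_neg]
      exact hb2 x
    · intro x
      simp only [LinearEquiv.trans_apply, LinearEquiv.neg_apply]
      rw [hu3 x, hcon x, map_neg]
  have htrc : LinearMap.trace F V (c : V →ₗ[F] V) = 0 :=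
    trace_invol hdim s halt hnd h2F c hc hc2 hne1c hne2c
  -- the auxiliary form B and the B-self-adjoint operator w
  set B : V →ₗ[F] V →ₗ[F] F := s ∘ₗ (a : V →ₗ[F] V) with hBdef
  have hBapp : ∀ x y, B x y = s (a x) y := fun x y => rfl
  have hBalt : ∀ x, B x x = 0 := by
    intro x
    have h1 : s (a x) x = s x (a x) := hmv a ha ha2 x x
    have h2' := hskew (a x) x
    have h3 : (2:F) * s (a x) x = 0 := by linear_combination h2' + h1
    rw [hBapp]
    rcases mul_eq_zero.mp h3 with h | h
    · exact absurd h h2F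
    · exact h
  have hBnd : ∀ x, (∀ y, B x y = 0) → x = 0 := by
    intro x hx
    have hax : a x = 0 := hnd (a x) (fun y => hx y)
    rw [← ha2 x, hax, map_zero]
  set w : V →ₗ[F] V := (a : V →ₗ[F] V) ∘ₗ (b : V →ₗ[F] V) with hwdef
  have hwapp : ∀ x, w x = a (b x) := fun x => rfl
  have hwsym : ∀ x y, B (w x) y = B x (w y) := by
    intro x y
    rw [hBapp, hBapp, hwapp, hwapp, ha2]
    calc s (b x) y = s x (b y) := hmv b hb hb2 x y
    _ = s (a x) (a (b y)) := (ha x (b y)).symm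
  obtain ⟨α, β, hquad⟩ := quad_of_selfadj hdim B hBalt hBnd h2F w hwsym
  have winj : Function.Injective w := by
    intro x y hxy
    rw [hwapp, hwapp] at hxy
    exact b.injective (a.injective hxy)
  by_cases hβ0 : β = 0
  · -- w is a scalar ±1, contradiction with h2
    exfalso
    have hwa : ∀ x, w x = α • x := by
      intro x
      apply winj
      rw [map_smul]
      have := hquad x
      rw [hβ0, zero_smul, add_zero] at this
      exact this
    have : Nontrivial V := Module.nontrivial_of_finrank_pos (R := F) (by omega)
    obtain ⟨x₀, hx₀⟩ := exists_ne (0 : V)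
    have hαsq : α * α = 1 := by
      have hba : ∀ x : V, b (a x) = α • x := by
        intro x
        have h5 : a (b (a x)) = α • a x := hwa (a x)
        have h6 : a (a (b (a x))) = a (α • a x) := by rw [h5]
        rw [ha2, map_smul, ha2] at h6
        exact h6
      have hbx : ∀ x : V, b x = α • a x := by
        intro x
        have h5 : a (a (b x)) = a (α • x) := by rw [ha2 (b x), ← hwa x, hwapp, ha2]
        rw [ha2] at h5
        rw [h5, map_smul]
      have h7 : x₀ = (α * α) • x₀ := by
        calc x₀ = b (b x₀) := (hb2 x₀).symm
        _ = b (α • a x₀) := by rw [hbx x₀]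
        _ = α • b (a x₀) := map_smul b α (a x₀)
        _ = α • (α • x₀) := by rw [hba]
        _ = (α * α) • x₀ := by rw [smul_smul]
      have h8 : (α * α - 1) • x₀ = 0 := by
        rw [sub_smul, one_smul, ← h7, sub_self]
      rcases smul_eq_zero.mp h8 with h | h
      · linear_combination h
      · exact absurd h hx₀
    rcases mul_self_eq_one_iff.mp hαsq with h1 | h1
    · apply h2
      refine ⟨LinearEquiv.refl F V, c, by simp, hc, by simp, hc2, fun x => ?_⟩
      simp only [LinearEquiv.refl_apply]
      rw [hu3 x]
      have : a (b (c x)) = α • c x := hwa (c x)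
      rw [this, h1, one_smul]
    · apply h2
      refine ⟨LinearEquiv.neg F, c, ?_, hc, ?_, hc2, fun x => ?_⟩
      · intro x y
        simp only [LinearEquiv.neg_apply, map_neg, LinearMap.neg_apply, neg_neg]
      · intro x
        simp only [LinearEquiv.neg_apply, neg_neg]
      · simp only [LinearEquiv.neg_apply]
        rw [hu3 x]
        have : a (b (c x)) = α • c x := hwa (c x)
        rw [this, h1, neg_smul, one_smul]
  · -- main computation
    set T := LinearMap.trace F V (u : V →ₗ[F] V) with hTdef
    -- reversed-product trace equality via the symplectic adjoint
    set g : V ≃ₗ[F] V := c.trans (a.trans b) with hgdef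
    have hgapp : ∀ x, g x = b (a (c x)) := fun x => rfl
    have hgsymp : ∀ x y, s (g x) (g y) = s x y := by
      intro x y
      rw [hgapp, hgapp, hb, ha, hc]
    have hgsymm : ∀ x, g.symm x = c (a (b x)) := by
      intro x
      apply g.injective
      rw [g.apply_symm_apply, hgapp, hc2, ha2, hb2]
    have htr_rev : LinearMap.trace F V ((b : V →ₗ[F] V) ∘ₗ (a : V →ₗ[F] V) ∘ₗ (c : V →ₗ[F] V))
        = T := by
      have h1 := trace_symm_eq s hnd g hgsymp
      have h2' : (g.symm : V →ₗ[F] V) =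
          ((c : V →ₗ[F] V) ∘ₗ (a : V →ₗ[F] V)) ∘ₗ (b : V →ₗ[F] V) := by
        apply LinearMap.ext
        intro x
        simp only [LinearMap.comp_apply, LinearEquiv.coe_coe]
        exact hgsymm x
      have h3 : (g : V →ₗ[F] V) =
          (b : V →ₗ[F] V) ∘ₗ (a : V →ₗ[F] V) ∘ₗ (c : V →ₗ[F] V) := by
        apply LinearMap.ext
        intro x
        simp only [LinearMap.comp_apply, LinearEquiv.coe_coe]
        exact hgapp x
      rw [h2', h3] at h1
      rw [← h1, LinearMap.comp_assoc, hTdef, hu3L]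
      exact LinearMap.trace_comp_comm' _ _
    -- (b ∘ a) = β⁻¹ • (w - α • id)
    have hba_eq : (b : V →ₗ[F] V) ∘ₗ (a : V →ₗ[F] V)
        = β⁻¹ • (w - α • LinearMap.id) := by
      apply LinearMap.ext
      intro x
      apply winj
      have lhs : w (b (a x)) = x := by
        rw [hwapp, hb2, ha2]
      have rhs : w (β⁻¹ • (w x - α • x)) = x := by
        rw [map_smul, map_sub, map_smul, hquad x]
        have h9 : α • w x + β • x - α • w x = β • x := by abel
        rw [h9, smul_smul, inv_mul_cancel₀ hβ0, one_smul]
      simp only [LinearMap.comp_apply, LinearEquiv.coe_coe, LinearMap.smul_apply,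
        LinearMap.sub_apply, LinearMap.smul_apply, LinearMap.id_apply]
      rw [lhs, rhs]
    -- trace identity : T = β⁻¹ * T
    have hkey : T = β⁻¹ * T := by
      have h4 : ((b : V →ₗ[F] V) ∘ₗ (a : V →ₗ[F] V)) ∘ₗ (c : V →ₗ[F] V)
          = β⁻¹ • (w ∘ₗ (c : V →ₗ[F] V) - α • (c : V →ₗ[F] V)) := by
        rw [hba_eq, LinearMap.smul_comp, LinearMap.sub_comp, LinearMap.smul_comp,
          LinearMap.id_comp]
      have h5 : LinearMap.trace F V (((b : V →ₗ[F] V) ∘ₗ (a : V →ₗ[F] V)) ∘ₗ (c : V →ₗ[F] V))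
          = β⁻¹ * T := by
        rw [h4, map_smul, map_sub, map_smul, smul_eq_mul, smul_eq_mul, htrc, mul_zero,
          sub_zero]
        have h10 : LinearMap.trace F V (w ∘ₗ (c : V →ₗ[F] V)) = T := by rw [hTdef, hu3L]
        rw [h10]
      rw [← h5, ← htr_rev, LinearMap.comp_assoc]
    by_cases hβ1 : β = 1
    · -- then w is an involution: contradiction with h2
      exfalso
      -- first show α = 0
      have htrw : LinearMap.trace F V ((b : V →ₗ[F] V) ∘ₗ (a : V →ₗ[F] V))
          = LinearMap.trace F V w := by
        rw [hwdef]
        exact LinearMap.trace_comp_comm' _ _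
      have hα0 : α = 0 := by
        have h6 : LinearMap.trace F V ((b : V →ₗ[F] V) ∘ₗ (a : V →ₗ[F] V))
            = LinearMap.trace F V w - α * 4 := by
          rw [hba_eq, hβ1, inv_one, one_smul, map_sub, map_smul, smul_eq_mul,
            LinearMap.trace_id]
          rw [hdim]
          norm_num
        rw [htrw] at h6
        have h7 : α * 4 = 0 := by linear_combination h6
        have h4F : (4:F) ≠ 0 := by
          intro h0
          apply h2F
          have : (2:F) * 2 = 0 := by linear_combination h0
          rcases mul_eq_zero.mp this with h | h
          · exact h
          · exact h
        rcases mul_eq_zero.mp h7 with h | h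
        · exact h
        · exact absurd h h4F
      have hw2 : ∀ x, w (w x) = x := by
        intro x
        rw [hquad x, hα0, hβ1, zero_smul, one_smul, zero_add]
      apply h2
      refine ⟨b.trans a, c, ?_, hc, ?_, hc2, fun x => ?_⟩
      · intro x y
        simp only [LinearEquiv.trans_apply]
        rw [ha, hb]
      · intro x
        simp only [LinearEquiv.trans_apply]
        have := hw2 x
        rw [hwapp, hwapp] at this
        exact this
      · simp only [LinearEquiv.trans_apply]
        exact hu3 x
    · -- conclude T = 0
      have h8 : (β - 1) * T = 0 := by
        have h9 : β * T = T := by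
          conv_lhs => rw [hkey, ← mul_assoc, mul_inv_cancel₀ hβ0, one_mul]
        linear_combination h9
      rcases mul_eq_zero.mp h8 with h | h
      · exfalso; apply hβ1; linear_combination h
      · exact h
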